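/- arXiv:math/0610185 — 2 statements merged into one kernel-verified Lean document; each statement's English description precedes it below -/
import Mathlib

section
/- For all x, y ∈ [n], the involutions φ_x and φ_y on S_n commute: φ_x(φ_y(π)) = φ_y(φ_x(π)) for all π ∈ S_n. -/
namespace FS

/-- The word `a_0, a_1, ..., a_n, a_{n+1}` of the permutation (as a list `l` of length `n`),
with the boundary convention `a_0 = a_{n+1} = n+1`. -/
def wordext (n : ℕ) (l : List ℕ) : ℕ → ℕ := fun i => ((n + 1) :: (l ++ [n + 1])).getD i 0

/-- Number of descents of the word `l`. -/
def desL (l : List ℕ) : ℕ := (l.zip l.tail).countP (fun p => decide (p.2 < p.1))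

/-- Number of peaks (boundary convention `a_0 = a_{n+1} = n+1`). -/
def peakL (n : ℕ) (l : List ℕ) : ℕ :=
  ((Finset.Icc 1 n).filter (fun k =>
    wordext n l (k - 1) < wordext n l k ∧ wordext n l (k + 1) < wordext n l k)).card

def valleyL (n : ℕ) (l : List ℕ) : ℕ :=
  ((Finset.Icc 1 n).filter (fun k =>
    wordext n l k < wordext n l (k - 1) ∧ wordext n l k < wordext n l (k + 1))).card

/-- Number of double ascents. -/
def daL (n : ℕ) (l : List ℕ) : ℕ :=
  ((Finset.Icc 1 n).filter (fun k =>
    wordext n l (k - 1) < wordext n l k ∧ wordext n l k < wordext n l (k + 1))).card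

/-- Number of double descents. -/
def ddL (n : ℕ) (l : List ℕ) : ℕ :=
  ((Finset.Icc 1 n).filter (fun k =>
    wordext n l k < wordext n l (k - 1) ∧ wordext n l (k + 1) < wordext n l k)).card

/-- All permutations of `[n] = {1, ..., n}` as lists. -/
def perms (n : ℕ) : List (List ℕ) := (List.range' 1 n).permutations

/-- The Foata–Strehl involution `φ_x`: writing `l = w₁ w₂ x w₄ w₅` where `w₂` (resp. `w₄`)
is the maximal contiguous subword immediately to the left (resp. right) of `x` all of whose
letters are smaller than `x`, we set `φ_x(l) = w₁ w₄ x w₂ w₅`. -/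
def phi (x : ℕ) (l : List ℕ) : List ℕ :=
  if x ∈ l then
    let L := l.takeWhile (fun y => y != x)
    let R := (l.dropWhile (fun y => y != x)).tail
    let w1 := (L.reverse.dropWhile (fun y => decide (y < x))).reverse
    let w2 := (L.reverse.takeWhile (fun y => decide (y < x))).reverse
    let w4 := R.takeWhile (fun y => decide (y < x))
    let w5 := R.dropWhile (fun y => decide (y < x))
    w1 ++ w4 ++ x :: (w2 ++ w5)
  else l

/-- The (1-indexed) position of the letter `x` in `l`. -/
def posIdx (l : List ℕ) (x : ℕ) : ℕ := l.idxOf x + 1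

/-- `x` is a double ascent of `l` (boundary convention `a_0 = a_{n+1} = n+1`). -/
def isDA (n : ℕ) (l : List ℕ) (x : ℕ) : Bool :=
  l.contains x && decide (wordext n l (posIdx l x - 1) < x)
    && decide (x < wordext n l (posIdx l x + 1))

/-- `x` is a double descent of `l` (boundary convention `a_0 = a_{n+1} = n+1`). -/
def isDD (n : ℕ) (l : List ℕ) (x : ℕ) : Bool :=
  l.contains x && decide (x < wordext n l (posIdx l x - 1))
    && decide (wordext n l (posIdx l x + 1) < x)

/-- The modified Foata–Strehl involution `φ'_x`. -/
def phi' (n x : ℕ) (l : List ℕ) : List ℕ :=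
  if isDA n l x || isDD n l x then phi x l else l



section AuxFS

lemma tw_dw (p : ℕ → Bool) (A B : List ℕ) (hA : ∀ a ∈ A, p a = true)
    (hB : ∀ b ∈ B.head?, p b = false) :
    (A ++ B).takeWhile p = A ∧ (A ++ B).dropWhile p = B := by
  induction A with
  | nil =>
    cases B with
    | nil => simp
    | cons b B' =>
      have hb := hB b rfl
      simp [List.takeWhile_cons, List.dropWhile_cons, hb]
  | cons a A ih =>
    have ha := hA a (by simp)
    have h' := ih (fun z hz => hA z (by simp [hz]))
    simp [List.takeWhile_cons, List.dropWhile_cons, ha, h'.1, h'.2]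

lemma head?_dropWhile' (p : ℕ → Bool) (l : List ℕ) :
    ∀ b ∈ (l.dropWhile p).head?, p b = false := by
  intro b hb
  have h := List.head?_dropWhile_not p l
  rw [Option.mem_def] at hb
  rw [hb] at h
  exact h

lemma phi_def (x : ℕ) (l : List ℕ) : phi x l =
    if x ∈ l then
      ((l.takeWhile (fun y => y != x)).reverse.dropWhile (fun y => decide (y < x))).reverse ++
        ((l.dropWhile (fun y => y != x)).tail.takeWhile (fun y => decide (y < x))) ++
        x :: (((l.takeWhile (fun y => y != x)).reverse.takeWhile (fun y => decide (y < x))).reverse ++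
          (l.dropWhile (fun y => y != x)).tail.dropWhile (fun y => decide (y < x)))
    else l := rfl

lemma phi_eq (x : ℕ) (w1 w2 w4 w5 : List ℕ)
    (h1 : x ∉ w1) (h2 : ∀ z ∈ w2, z < x) (h4 : ∀ z ∈ w4, z < x)
    (hL : ∀ z ∈ w1.getLast?, ¬ z < x) (hR : ∀ z ∈ w5.head?, ¬ z < x) :
    phi x (w1 ++ (w2 ++ x :: (w4 ++ w5))) = w1 ++ (w4 ++ x :: (w2 ++ w5)) := by
  have hmem : x ∈ w1 ++ (w2 ++ x :: (w4 ++ w5)) := by simp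
  set p : ℕ → Bool := fun y => y != x with hp
  set q : ℕ → Bool := fun y => decide (y < x) with hq
  have e0 : w1 ++ (w2 ++ x :: (w4 ++ w5)) = (w1 ++ w2) ++ (x :: (w4 ++ w5)) := by simp
  have h12 : ∀ a ∈ w1 ++ w2, p a = true := by
    intro a ha
    rcases List.mem_append.1 ha with h | h
    · simp [hp]; exact fun e => h1 (e ▸ h)
    · simp [hp]; exact Nat.ne_of_lt (h2 a h)
  obtain ⟨htw, hdw⟩ := tw_dw p (w1 ++ w2) (x :: (w4 ++ w5)) h12
      (by intro b hb; simp at hb; subst hb; simp [hp])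
  have htw' : (w1 ++ (w2 ++ x :: (w4 ++ w5))).takeWhile p = w1 ++ w2 := by rw [e0]; exact htw
  have hdw' : (w1 ++ (w2 ++ x :: (w4 ++ w5))).dropWhile p = x :: (w4 ++ w5) := by
    rw [e0]; exact hdw
  obtain ⟨ht2, hd2⟩ := tw_dw q w2.reverse w1.reverse
      (by intro a ha; simp [hq]; exact h2 a (List.mem_reverse.1 ha))
      (by intro b hb; rw [List.head?_reverse] at hb; simpa [hq] using hL b hb)
  obtain ⟨ht4, hd4⟩ := tw_dw q w4 w5
      (by intro a ha; simp [hq]; exact h4 a ha)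
      (by intro b hb; simpa [hq] using hR b hb)
  rw [phi_def, if_pos hmem]
  rw [htw', hdw', List.tail_cons, List.reverse_append, ht2, hd2, ht4, hd4,
    List.reverse_reverse, List.reverse_reverse]
  simp

lemma decomp (x : ℕ) (l : List ℕ) (hx : x ∈ l) :
    ∃ w1 w2 w4 w5 : List ℕ,
      l = w1 ++ (w2 ++ x :: (w4 ++ w5)) ∧ x ∉ w1 ∧
      (∀ z ∈ w2, z < x) ∧ (∀ z ∈ w4, z < x) ∧
      (∀ z ∈ w1.getLast?, ¬ z < x) ∧ (∀ z ∈ w5.head?, ¬ z < x) := by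
  set p : ℕ → Bool := fun y => y != x with hp
  set q : ℕ → Bool := fun y => decide (y < x) with hq
  set L := l.takeWhile p with hL
  set D := l.dropWhile p with hD
  have hDne : D ≠ [] := by
    intro h
    have hl' : l = L := by
      conv_lhs => rw [← List.takeWhile_append_dropWhile (p := p) (l := l)]
      rw [← hL, ← hD, h, List.append_nil]
    have := List.mem_takeWhile_imp (p := p) (l := l) (by rw [← hL, ← hl']; exact hx)
    simp [hp] at this
  obtain ⟨e, Dt, hDeq⟩ := List.exists_cons_of_ne_nil hDne
  have hex : e = x := by
    have := head?_dropWhile' p l e (by rw [← hD, hDeq]; rfl)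
    simpa [hp] using this
  subst hex
  have hsplit : l = L ++ e :: Dt := by
    conv_lhs => rw [← List.takeWhile_append_dropWhile (p := p) (l := l)]
    rw [← hL, ← hD, hDeq]
  refine ⟨(L.reverse.dropWhile q).reverse, (L.reverse.takeWhile q).reverse,
    Dt.takeWhile q, Dt.dropWhile q, ?_, ?_, ?_, ?_, ?_, ?_⟩
  · have hLw : (L.reverse.dropWhile q).reverse ++ (L.reverse.takeWhile q).reverse = L := by
      rw [← List.reverse_append, List.takeWhile_append_dropWhile, List.reverse_reverse]
    rw [hsplit, List.takeWhile_append_dropWhile, ← hLw]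
    simp
  · intro hmem
    have : e ∈ L := by
      have := (List.dropWhile_sublist (l := L.reverse) q).subset (List.mem_reverse.1 hmem)
      exact List.mem_reverse.1 this
    have := List.mem_takeWhile_imp (p := p) (by rw [← hL]; exact this)
    simp [hp] at this
  · intro z hz
    have := List.mem_takeWhile_imp (p := q) (List.mem_reverse.1 hz)
    simpa [hq] using this
  · intro z hz
    have := List.mem_takeWhile_imp (p := q) hz
    simpa [hq] using this
  · intro z hz
    rw [List.getLast?_reverse] at hz
    have := head?_dropWhile' q L.reverse z hz
    simpa [hq] using this
  · intro z hz
    have := head?_dropWhile' q Dt z hz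
    simpa [hq] using this

lemma wall_getLast {P : ℕ → Prop} {A B : List ℕ} (hA : ∀ z ∈ A.getLast?, P z)
    (hB : ∀ z ∈ B.getLast?, P z) : ∀ z ∈ (A ++ B).getLast?, P z := by
  rcases B with _ | ⟨b, B⟩
  · simpa using hA
  · rw [List.getLast?_append_of_ne_nil _ (by simp)]
    exact hB

lemma wall_getLast' {P : ℕ → Prop} {A B : List ℕ} (hB : B ≠ [])
    (h : ∀ z ∈ B.getLast?, P z) : ∀ z ∈ (A ++ B).getLast?, P z := by
  rw [List.getLast?_append_of_ne_nil _ hB]; exact h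

lemma wall_getLast_cons {P : ℕ → Prop} {t : ℕ} {a : List ℕ} (ht : P t)
    (ha : ∀ z ∈ a.getLast?, P z) : ∀ z ∈ (t :: a).getLast?, P z := by
  have e : (t :: a) = [t] ++ a := rfl
  rw [e]
  exact wall_getLast (by simpa using ht) ha

lemma wall_head {P : ℕ → Prop} {A B : List ℕ} (hA : ∀ z ∈ A.head?, P z)
    (hB : ∀ z ∈ B.head?, P z) : ∀ z ∈ (A ++ B).head?, P z := by
  rcases A with _ | ⟨a, A⟩
  · simpa using hB
  · simpa using hA

lemma wall_head' {P : ℕ → Prop} {A B : List ℕ} (hA : A ≠ [])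
    (h : ∀ z ∈ A.head?, P z) : ∀ z ∈ (A ++ B).head?, P z := by
  rcases A with _ | ⟨a, A⟩
  · exact absurd rfl hA
  · simpa using h

lemma wall_head_cons {P : ℕ → Prop} {t : ℕ} {a : List ℕ} (ht : P t) :
    ∀ z ∈ (t :: a).head?, P z := by simpa using ht

lemma key (x y : ℕ) (l : List ℕ) (hxy : x < y) (hx : x ∈ l) (hy : y ∈ l)
    (hnd : l.Nodup) : phi x (phi y l) = phi y (phi x l) := by
  obtain ⟨W1, W2, W4, W5, hleq, hyW1, hW2, hW4, gy1, gy5⟩ := decomp y l hy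
  subst hleq
  have hxney : x ≠ y := Nat.ne_of_lt hxy
  have hyx : ¬ y < x := by omega
  have gy1' : ∀ z ∈ W1.getLast?, ¬ z < x := fun z hz h => gy1 z hz (lt_trans h hxy)
  have gy5' : ∀ z ∈ W5.head?, ¬ z < x := fun z hz h => gy5 z hz (lt_trans h hxy)
  rw [List.nodup_append] at hnd
  obtain ⟨-, hndR, hdis1⟩ := hnd
  rw [List.nodup_append] at hndR
  obtain ⟨-, hndC, hdis2⟩ := hndR
  rw [List.nodup_cons] at hndC
  obtain ⟨hyW45, hnd45⟩ := hndC
  rw [List.nodup_append] at hnd45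
  obtain ⟨-, -, hdis45⟩ := hnd45
  simp only [List.mem_append, List.mem_cons] at hx
  rcases hx with hxW1 | hxW2 | rfl | hxW4 | hxW5
  · -- x ∈ W1
    obtain ⟨a, b, c, d, hWeq, hxa, hb, hc, ga, gd⟩ := decomp x W1 hxW1
    subst hWeq
    have hdne : d ≠ [] := by
      rintro rfl
      have h1 : ∀ z ∈ (x :: (c ++ ([] : List ℕ))).getLast?, z < y := by
        rw [List.append_nil]
        rcases c.eq_nil_or_concat with rfl | ⟨c', t, rfl⟩
        · intro z hz; simp only [List.getLast?_singleton, Option.mem_def,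
            Option.some.injEq] at hz; omega
        · intro z hz
          simp only [List.concat_eq_append] at hz hc
          rw [show x :: (c' ++ [t]) = (x :: c') ++ [t] from rfl,
            List.getLast?_append_of_ne_nil _ (by simp)] at hz
          simp only [List.getLast?_singleton, Option.mem_def, Option.some.injEq] at hz
          subst hz
          exact lt_trans (hc t (by simp)) hxy
      have h2 : (a ++ (b ++ x :: (c ++ ([] : List ℕ)))).getLast?
          = (x :: (c ++ ([] : List ℕ))).getLast? := by
        rw [List.getLast?_append_of_ne_nil _ (by simp), List.getLast?_append_of_ne_nil _ (by simp)]
      rcases hgl : (x :: (c ++ ([] : List ℕ))).getLast? with _ | z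
      · simp at hgl
      · exact gy1 z (by rw [h2, hgl]; rfl) (h1 z (by rw [hgl]; rfl))
    have gdlast : ∀ z ∈ d.getLast?, ¬ z < y := by
      intro z hz
      apply gy1
      rw [List.getLast?_append_of_ne_nil _ (by simp), List.getLast?_append_of_ne_nil _ (by simp),
        show x :: (c ++ d) = [x] ++ (c ++ d) from rfl,
        List.getLast?_append_of_ne_nil _ (fun h => hdne (List.append_eq_nil_iff.mp h).2),
        List.getLast?_append_of_ne_nil _ hdne]
      exact hz
    have hya : y ∉ a := fun h => hyW1 (by simp [h])
    have hyb : y ∉ b := fun h => hyW1 (by simp [h])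
    have hyc : y ∉ c := fun h => hyW1 (by simp [h])
    have hyd : y ∉ d := fun h => hyW1 (by simp [h])
    have s3 := phi_eq y (a ++ (b ++ x :: (c ++ d))) W2 W4 W5 hyW1 hW2 hW4 gy1 gy5
    have e3 : (a ++ (b ++ x :: (c ++ d))) ++ (W4 ++ y :: (W2 ++ W5))
        = a ++ (b ++ x :: (c ++ (d ++ (W4 ++ y :: (W2 ++ W5))))) := by simp
    have s4 := phi_eq x a b c (d ++ (W4 ++ y :: (W2 ++ W5))) hxa hb hc ga
      (wall_head' hdne gd)
    have e1 : (a ++ (b ++ x :: (c ++ d))) ++ (W2 ++ y :: (W4 ++ W5))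
        = a ++ (b ++ x :: (c ++ (d ++ (W2 ++ y :: (W4 ++ W5))))) := by simp
    have s1 := phi_eq x a b c (d ++ (W2 ++ y :: (W4 ++ W5))) hxa hb hc ga
      (wall_head' hdne gd)
    have e2 : a ++ (c ++ x :: (b ++ (d ++ (W2 ++ y :: (W4 ++ W5)))))
        = (a ++ (c ++ x :: (b ++ d))) ++ (W2 ++ y :: (W4 ++ W5)) := by simp
    have s2 := phi_eq y (a ++ (c ++ x :: (b ++ d))) W2 W4 W5
      (by simp only [List.mem_append, List.mem_cons, not_or]
          exact ⟨hya, hyc, fun h => hxney h.symm, hyb, hyd⟩)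
      hW2 hW4
      (wall_getLast' (by simp) (wall_getLast' (by simp)
        (wall_getLast' (A := [x]) (fun h => hdne (List.append_eq_nil_iff.mp h).2)
          (wall_getLast' hdne gdlast))))
      gy5
    rw [s3, e3, s4, e1, s1, e2, s2]
    simp
  · -- x ∈ W2
    obtain ⟨a, b, c, d, hWeq, hxa, hb, hc, ga, gd⟩ := decomp x W2 hxW2
    subst hWeq
    have hxW1 : x ∉ W1 := fun h => hdis1 x h x (by simp) rfl
    have hxW4 : x ∉ W4 := fun h => hdis2 x hxW2 x (by simp [h]) rfl
    have ha' : ∀ z ∈ a, z < y := fun z hz => hW2 z (by simp [hz])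
    have hb' : ∀ z ∈ b, z < y := fun z hz => hW2 z (by simp [hz])
    have hc' : ∀ z ∈ c, z < y := fun z hz => hW2 z (by simp [hz])
    have hd' : ∀ z ∈ d, z < y := fun z hz => hW2 z (by simp [hz])
    have s1 := phi_eq y W1 (a ++ (b ++ x :: (c ++ d))) W4 W5 hyW1 hW2 hW4 gy1 gy5
    have e2 : W1 ++ (W4 ++ y :: ((a ++ (b ++ x :: (c ++ d))) ++ W5))
        = (W1 ++ (W4 ++ y :: a)) ++ (b ++ x :: (c ++ (d ++ W5))) := by simp
    have s2 := phi_eq x (W1 ++ (W4 ++ y :: a)) b c (d ++ W5)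
      (by simp only [List.mem_append, List.mem_cons, not_or]
          exact ⟨hxW1, hxW4, hxney, hxa⟩)
      hb hc
      (wall_getLast' (by simp) (wall_getLast' (by simp) (wall_getLast_cons hyx ga)))
      (wall_head gd gy5')
    have e3 : W1 ++ ((a ++ (b ++ x :: (c ++ d))) ++ y :: (W4 ++ W5))
        = (W1 ++ a) ++ (b ++ x :: (c ++ (d ++ y :: (W4 ++ W5)))) := by simp
    have s3 := phi_eq x (W1 ++ a) b c (d ++ y :: (W4 ++ W5))
      (by simp only [List.mem_append, not_or]; exact ⟨hxW1, hxa⟩)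
      hb hc
      (wall_getLast gy1' ga)
      (wall_head gd (wall_head_cons hyx))
    have e4 : (W1 ++ a) ++ (c ++ x :: (b ++ (d ++ y :: (W4 ++ W5))))
        = W1 ++ ((a ++ (c ++ x :: (b ++ d))) ++ y :: (W4 ++ W5)) := by simp
    have s4 := phi_eq y W1 (a ++ (c ++ x :: (b ++ d))) W4 W5 hyW1
      (by intro z hz
          simp only [List.mem_append, List.mem_cons] at hz
          rcases hz with h | h | rfl | h | h
          exacts [ha' _ h, hc' _ h, hxy, hb' _ h, hd' _ h])
      hW4 gy1 gy5
    rw [s1, e2, s2, e3, s3, e4, s4]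
    simp
  · exact absurd hxy (lt_irrefl x)
  · -- x ∈ W4
    obtain ⟨a, b, c, d, hWeq, hxa, hb, hc, ga, gd⟩ := decomp x W4 hxW4
    subst hWeq
    have hxW1 : x ∉ W1 := fun h => hdis1 x h x (by simp) rfl
    have hxW2 : x ∉ W2 := fun h => hdis2 x h x (by simp) rfl
    have ha' : ∀ z ∈ a, z < y := fun z hz => hW4 z (by simp [hz])
    have hb' : ∀ z ∈ b, z < y := fun z hz => hW4 z (by simp [hz])
    have hc' : ∀ z ∈ c, z < y := fun z hz => hW4 z (by simp [hz])
    have hd' : ∀ z ∈ d, z < y := fun z hz => hW4 z (by simp [hz])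
    have s1 := phi_eq y W1 W2 (a ++ (b ++ x :: (c ++ d))) W5 hyW1 hW2 hW4 gy1 gy5
    have e2 : W1 ++ ((a ++ (b ++ x :: (c ++ d))) ++ y :: (W2 ++ W5))
        = (W1 ++ a) ++ (b ++ x :: (c ++ (d ++ y :: (W2 ++ W5)))) := by simp
    have s2 := phi_eq x (W1 ++ a) b c (d ++ y :: (W2 ++ W5))
      (by simp only [List.mem_append, not_or]; exact ⟨hxW1, hxa⟩)
      hb hc
      (wall_getLast gy1' ga)
      (wall_head gd (wall_head_cons hyx))
    have e3 : W1 ++ (W2 ++ y :: ((a ++ (b ++ x :: (c ++ d))) ++ W5))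
        = (W1 ++ (W2 ++ y :: a)) ++ (b ++ x :: (c ++ (d ++ W5))) := by simp
    have s3 := phi_eq x (W1 ++ (W2 ++ y :: a)) b c (d ++ W5)
      (by simp only [List.mem_append, List.mem_cons, not_or]
          exact ⟨hxW1, hxW2, hxney, hxa⟩)
      hb hc
      (wall_getLast' (by simp) (wall_getLast' (by simp) (wall_getLast_cons hyx ga)))
      (wall_head gd gy5')
    have e4 : (W1 ++ (W2 ++ y :: a)) ++ (c ++ x :: (b ++ (d ++ W5)))
        = W1 ++ (W2 ++ y :: ((a ++ (c ++ x :: (b ++ d))) ++ W5)) := by simp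
    have s4 := phi_eq y W1 W2 (a ++ (c ++ x :: (b ++ d))) W5 hyW1 hW2
      (by intro z hz
          simp only [List.mem_append, List.mem_cons] at hz
          rcases hz with h | h | rfl | h | h
          exacts [ha' _ h, hc' _ h, hxy, hb' _ h, hd' _ h])
      gy1 gy5
    rw [s1, e2, s2, e3, s3, e4, s4]
    simp
  · -- x ∈ W5
    obtain ⟨a, b, c, d, hWeq, hxa, hb, hc, ga, gd⟩ := decomp x W5 hxW5
    subst hWeq
    have hane : a ≠ [] := by
      rintro rfl
      rcases b with _ | ⟨b0, b'⟩
      · exact gy5 x (by simp) hxy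
      · exact gy5 b0 (by simp) (lt_trans (hb b0 (by simp)) hxy)
    have ga5 : ∀ z ∈ a.head?, ¬ z < y := by
      intro z hz
      apply gy5
      rcases a with _ | ⟨a0, a'⟩
      · exact absurd rfl hane
      · simpa using hz
    have hxW1 : x ∉ W1 := fun h => hdis1 x h x (by simp) rfl
    have hxW2 : x ∉ W2 := fun h => hdis2 x h x (by simp) rfl
    have hxW4 : x ∉ W4 := fun h => hdis45 x h x (by simp) rfl
    have s1 := phi_eq y W1 W2 W4 (a ++ (b ++ x :: (c ++ d))) hyW1 hW2 hW4 gy1 gy5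
    have e2 : W1 ++ (W4 ++ y :: (W2 ++ (a ++ (b ++ x :: (c ++ d)))))
        = (W1 ++ (W4 ++ y :: (W2 ++ a))) ++ (b ++ x :: (c ++ d)) := by simp
    have s2 := phi_eq x (W1 ++ (W4 ++ y :: (W2 ++ a))) b c d
      (by simp only [List.mem_append, List.mem_cons, not_or]
          exact ⟨hxW1, hxW4, hxney, hxW2, hxa⟩)
      hb hc
      (wall_getLast' (by simp) (wall_getLast' (by simp)
        (wall_getLast_cons hyx (wall_getLast' hane ga))))
      gd
    have e3 : W1 ++ (W2 ++ y :: (W4 ++ (a ++ (b ++ x :: (c ++ d)))))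
        = (W1 ++ (W2 ++ y :: (W4 ++ a))) ++ (b ++ x :: (c ++ d)) := by simp
    have s3 := phi_eq x (W1 ++ (W2 ++ y :: (W4 ++ a))) b c d
      (by simp only [List.mem_append, List.mem_cons, not_or]
          exact ⟨hxW1, hxW2, hxney, hxW4, hxa⟩)
      hb hc
      (wall_getLast' (by simp) (wall_getLast' (by simp)
        (wall_getLast_cons hyx (wall_getLast' hane ga))))
      gd
    have e4 : (W1 ++ (W2 ++ y :: (W4 ++ a))) ++ (c ++ x :: (b ++ d))
        = W1 ++ (W2 ++ y :: (W4 ++ (a ++ (c ++ x :: (b ++ d))))) := by simp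
    have s4 := phi_eq y W1 W2 W4 (a ++ (c ++ x :: (b ++ d))) hyW1 hW2 hW4 gy1
      (wall_head' hane ga5)
    rw [s1, e2, s2, e3, s3, e4, s4]
    simp

end AuxFS

/-- the involutions `φ_x` and `φ_y` commute on `S_n`. -/
theorem phi_commute (n x y : ℕ) (l : List ℕ) (hx : x ∈ Finset.Icc 1 n)
    (hy : y ∈ Finset.Icc 1 n) (hl : l.Perm (List.range' 1 n)) :
    phi x (phi y l) = phi y (phi x l) := by
  have hnd : l.Nodup := hl.symm.nodup (List.nodup_range' (s := 1) (n := n))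
  have hmem : ∀ z : ℕ, z ∈ Finset.Icc 1 n → z ∈ l := by
    intro z hz
    rw [hl.mem_iff, List.mem_range'_1]
    simp only [Finset.mem_Icc] at hz
    omega
  rcases lt_trichotomy x y with h | rfl | h
  · exact key x y l h (hmem x hx) (hmem y hy) hnd
  · rfl
  · exact (key y x l h (hmem y hy) (hmem x hx) hnd).symm

end FS
end

section
/- If x ∈ [n] is a double ascent of π ∈ S_n (with boundary convention a_0 = a_{n+1} = n+1), then des(φ'_x(π)) = des(π) + 1, and if x is a double descent then des(φ'_x(π)) = des(π) - 1, where φ'_x is the modified Foata–Strehl involution. -/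
namespace FS

/-! ### Auxiliary lemmas -/

def jnc (a b : List ℕ) : ℕ := if b.headD (a.getLastD 0) < a.getLastD 0 then 1 else 0

lemma getLastD_single (a d : ℕ) : [a].getLastD d = a := rfl

lemma desL_nil : desL [] = 0 := rfl
lemma desL_single (a : ℕ) : desL [a] = 0 := rfl
lemma desL_cons_cons (a b : ℕ) (t : List ℕ) :
    desL (a :: b :: t) = (if b < a then 1 else 0) + desL (b :: t) := by
  simp [desL, List.countP_cons]
  omega

lemma jnc_nil_left (b : List ℕ) : jnc [] b = 0 := by
  cases b <;> simp [jnc]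

lemma desL_append (a b : List ℕ) : desL (a ++ b) = desL a + desL b + jnc a b := by
  induction a with
  | nil => simp [desL_nil, jnc_nil_left]
  | cons u t ih =>
    cases t with
    | nil =>
      cases b with
      | nil => simp [desL_single, jnc, desL_nil]
      | cons v s => simp [desL_cons_cons, jnc, desL_single]; omega
    | cons v s =>
      have h1 : desL ((u :: v :: s) ++ b) = (if v < u then 1 else 0) + desL ((v :: s) ++ b) := by
        rw [show (u :: v :: s) ++ b = u :: v :: (s ++ b) from rfl, desL_cons_cons]
        rfl
      rw [h1, ih, desL_cons_cons]
      have hj : jnc (u :: v :: s) b = jnc (v :: s) b := by simp [jnc]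
      rw [hj]; omega

lemma desL_cons (a : ℕ) (l : List ℕ) : desL (a :: l) = desL l + jnc [a] l := by
  have h := desL_append [a] l
  rw [List.singleton_append] at h
  rw [h, desL_single]
  omega

lemma decomp_s9 {l : List ℕ} {x : ℕ} (h : x ∈ l) :
    l = l.takeWhile (fun y => y != x) ++ x :: (l.dropWhile (fun y => y != x)).tail ∧
    l.idxOf x = (l.takeWhile (fun y => y != x)).length := by
  induction l with
  | nil => cases h
  | cons a t ih =>
    by_cases hax : a = x
    · subst hax
      simp [List.takeWhile, List.dropWhile, List.idxOf_cons]
    · have hmem : x ∈ t := by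
        rcases List.mem_cons.mp h with h1 | h1
        · exact absurd h1.symm hax
        · exact h1
      obtain ⟨ih1, ih2⟩ := ih hmem
      have hb : (a != x) = true := by simp [hax]
      have hbe : (a == x) = false := by simp [hax]
      constructor
      · simp only [List.takeWhile_cons, List.dropWhile_cons, hb, if_true, cond_true]
        rw [List.cons_append]
        exact congrArg (a :: ·) ih1
      · simp [List.idxOf_cons, hbe, List.takeWhile_cons, hb, ih2]

lemma wordext_split (n : ℕ) (A B l : List ℕ) (hl : l = A ++ B) (j : ℕ) :
    wordext n l (A.length + 1 + j) = (B ++ [n+1]).getD j 0 := by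
  subst hl
  show ((n+1) :: ((A ++ B) ++ [n+1])).getD (A.length + 1 + j) 0 = _
  rw [show A.length + 1 + j = (A.length + j) + 1 by omega, List.getD_cons_succ,
    List.append_assoc, List.getD_append_right _ _ _ _ (by omega)]
  congr 1; omega

lemma wordext_zero (n : ℕ) (l : List ℕ) : wordext n l 0 = n + 1 := rfl

lemma dropWhile_head_false {p : ℕ → Bool} {l : List ℕ} {e : ℕ} {d' : List ℕ}
    (h : l.dropWhile p = e :: d') : p e = false := by
  induction l with
  | nil => simp at h
  | cons a s ih =>
    rw [List.dropWhile_cons] at h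
    by_cases hpa : p a = true
    · rw [if_pos hpa] at h; exact ih h
    · rw [if_neg hpa] at h
      injection h with h1 _
      simp only [Bool.not_eq_true] at hpa
      rwa [← h1]

lemma phi_eq_s9 {x : ℕ} {l : List ℕ} (h : x ∈ l) :
    phi x l = ((l.takeWhile (fun y => y != x)).reverse.dropWhile
        (fun y => decide (y < x))).reverse
      ++ ((l.dropWhile (fun y => y != x)).tail.takeWhile (fun y => decide (y < x)))
      ++ x :: (((l.takeWhile (fun y => y != x)).reverse.takeWhile
        (fun y => decide (y < x))).reverse
        ++ (l.dropWhile (fun y => y != x)).tail.dropWhile (fun y => decide (y < x))) := by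
  simp [phi, h]

/-- if `x` is a double ascent of `π` then `des(φ'_x(π)) = des(π) + 1`, and
if `x` is a double descent then `des(φ'_x(π)) = des(π) - 1`. -/
theorem des_phi' (n x : ℕ) (l : List ℕ) (hx : x ∈ Finset.Icc 1 n)
    (hl : l.Perm (List.range' 1 n)) :
    (isDA n l x = true → desL (phi' n x l) = desL l + 1) ∧
    (isDD n l x = true → desL (phi' n x l) = desL l - 1) := by
  have hnd : l.Nodup := hl.nodup_iff.mpr (List.nodup_range' ..)
  obtain ⟨hx1, hxn⟩ := Finset.mem_Icc.mp hx
  constructor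
  · -- double ascent case
    intro h
    have hphi' : phi' n x l = phi x l := by simp [phi', h]
    rw [hphi']
    simp only [isDA, Bool.and_eq_true, decide_eq_true_eq] at h
    obtain ⟨⟨hc, hld⟩, hrd⟩ := h
    have hmem : x ∈ l := by simpa using hc
    obtain ⟨hsplit, hidx⟩ := decomp_s9 hmem
    rw [phi_eq_s9 hmem]
    set L := l.takeWhile (fun y => y != x) with hLd
    set R := (l.dropWhile (fun y => y != x)).tail with hRd
    clear_value L R
    simp only [posIdx, hidx, Nat.add_sub_cancel] at hld hrd
    -- hld : wordext n l L.length < x ; hrd : x < wordext n l (L.length + 1 + 1)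
    rcases List.eq_nil_or_concat L with hL0 | ⟨M, u, hMu⟩
    · rw [hL0] at hld
      simp only [List.length_nil] at hld
      rw [wordext_zero] at hld
      omega
    rw [List.concat_eq_append] at hMu
    have hlenL : L.length = M.length + 1 := by rw [hMu]; simp
    have hu : u < x := by
      have h2 := wordext_split n M (u :: x :: R) l (by rw [hsplit, hMu]; simp) 0
      simp only [Nat.add_zero, List.cons_append, List.getD_cons_zero] at h2
      rw [hlenL, h2] at hld
      exact hld
    have hr2 := wordext_split n L (x :: R) l hsplit 1
    simp only [List.cons_append, List.getD_cons_succ] at hr2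
    rw [hr2] at hrd
    -- hrd : x < (R ++ [n+1]).getD 0 0
    have hw4 : R.takeWhile (fun y => decide (y < x)) = [] := by
      cases R with
      | nil => rfl
      | cons r R' =>
        simp only [List.cons_append, List.getD_cons_zero] at hrd
        rw [List.takeWhile_cons, if_neg (by simp only [decide_eq_true_eq]; omega)]
    have hw5 : R.dropWhile (fun y => decide (y < x)) = R := by
      cases R with
      | nil => rfl
      | cons r R' =>
        simp only [List.cons_append, List.getD_cons_zero] at hrd
        rw [List.dropWhile_cons, if_neg (by simp only [decide_eq_true_eq]; omega)]
    have hLrev : L.reverse = u :: M.reverse := by rw [hMu]; simp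
    set t := M.reverse.takeWhile (fun y => decide (y < x)) with htd
    set d := M.reverse.dropWhile (fun y => decide (y < x)) with hdd
    clear_value t d
    have hw2 : L.reverse.takeWhile (fun y => decide (y < x)) = u :: t := by
      rw [hLrev, List.takeWhile_cons, if_pos (by simpa using hu), htd]
    have hw1 : L.reverse.dropWhile (fun y => decide (y < x)) = d := by
      rw [hLrev, List.dropWhile_cons, if_pos (by simpa using hu), hdd]
    have hM : M.reverse = t ++ d := by rw [htd, hdd]; exact List.takeWhile_append_dropWhile.symm
    have hMeq : M = d.reverse ++ t.reverse := by
      rw [← List.reverse_reverse M, hM, List.reverse_append]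
    have hl2 : l = d.reverse ++ ((t.reverse ++ [u]) ++ (x :: R)) := by
      rw [hsplit, hMu, hMeq]
      simp [List.append_assoc]
    have hall : ∀ y ∈ t.reverse ++ [u], y < x := by
      intro y hy
      rcases List.mem_append.mp hy with hy | hy
      · have := List.mem_takeWhile_imp (htd ▸ List.mem_reverse.mp hy)
        simpa using this
      · simp only [List.mem_singleton] at hy
        omega
    obtain ⟨c, w2t, hcw⟩ := List.exists_cons_of_ne_nil
      (show t.reverse ++ [u] ≠ [] by simp)
    have hcx : c < x := hall c (by rw [hcw]; exact List.mem_cons_self)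
    -- junction values
    have j1 : jnc [x] ((t.reverse ++ [u]) ++ R) = 1 := by
      rw [hcw]
      simp [jnc, hcx]
    have j2 : jnc (t.reverse ++ [u]) (x :: R) = 0 := by
      simp only [jnc, List.getLastD_concat, List.headD_cons]
      rw [if_neg (by omega)]
    have j3 : jnc [x] R = 0 := by
      cases R with
      | nil => simp [jnc]
      | cons r R' =>
        simp only [List.cons_append, List.getD_cons_zero] at hrd
        simp only [jnc, List.headD_cons, getLastD_single]
        exact if_neg (by omega)
    have j4 : jnc (t.reverse ++ [u]) R = 0 := by
      cases R with
      | nil => simp [jnc, List.getLastD_concat]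
      | cons r R' =>
        simp only [List.cons_append, List.getD_cons_zero] at hrd
        simp only [jnc, List.getLastD_concat, List.headD_cons]
        rw [if_neg (by omega)]
    have j5 : jnc d.reverse (x :: ((t.reverse ++ [u]) ++ R))
        = jnc d.reverse ((t.reverse ++ [u]) ++ (x :: R)) := by
      cases d with
      | nil => simp [jnc_nil_left]
      | cons e d' =>
        have hpe : (fun y => decide (y < x)) e = false := dropWhile_head_false hdd.symm
        have hex : ¬ e < x := by simpa using hpe
        have heM : e ∈ M.reverse := (List.dropWhile_sublist _).mem
          (by rw [← hdd]; exact List.mem_cons_self)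
        have heL : e ∈ L := by
          rw [hMu]
          exact List.mem_append_left _ (List.mem_reverse.mp heM)
        have hnex : e ≠ x := by
          have := List.mem_takeWhile_imp (hLd ▸ heL)
          simpa using this
        rw [List.reverse_cons, hcw]
        simp only [jnc, List.getLastD_concat, List.headD_cons, List.cons_append]
        rw [if_pos (by omega), if_pos (by omega)]
    -- compute both sides
    have hgoal : (L.reverse.dropWhile (fun y => decide (y < x))).reverse
        ++ R.takeWhile (fun y => decide (y < x))
        ++ x :: ((L.reverse.takeWhile (fun y => decide (y < x))).reverse
          ++ R.dropWhile (fun y => decide (y < x)))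
        = d.reverse ++ (x :: ((t.reverse ++ [u]) ++ R)) := by
      rw [hw1, hw2, hw4, hw5, List.reverse_cons]
      simp [List.append_assoc]
    rw [hgoal]
    have e1 := desL_append d.reverse (x :: ((t.reverse ++ [u]) ++ R))
    have e2 := desL_cons x ((t.reverse ++ [u]) ++ R)
    have e3 := desL_append (t.reverse ++ [u]) R
    have f1 : desL l = desL d.reverse + desL ((t.reverse ++ [u]) ++ (x :: R))
        + jnc d.reverse ((t.reverse ++ [u]) ++ (x :: R)) := by
      rw [hl2]; exact desL_append _ _
    have f2 := desL_append (t.reverse ++ [u]) (x :: R)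
    have f3 := desL_cons x R
    omega
  · -- double descent case
    intro h
    have hphi' : phi' n x l = phi x l := by simp [phi', h]
    rw [hphi']
    simp only [isDD, Bool.and_eq_true, decide_eq_true_eq] at h
    obtain ⟨⟨hc, hld⟩, hrd⟩ := h
    have hmem : x ∈ l := by simpa using hc
    obtain ⟨hsplit, hidx⟩ := decomp_s9 hmem
    rw [phi_eq_s9 hmem]
    set L := l.takeWhile (fun y => y != x) with hLd
    set R := (l.dropWhile (fun y => y != x)).tail with hRd
    clear_value L R
    simp only [posIdx, hidx, Nat.add_sub_cancel] at hld hrd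
    have hr2 := wordext_split n L (x :: R) l hsplit 1
    simp only [List.cons_append, List.getD_cons_succ] at hr2
    rw [hr2] at hrd
    -- hrd : (R ++ [n+1]).getD 0 0 < x
    obtain ⟨r, R', hRr⟩ : ∃ r R', R = r :: R' := by
      cases R with
      | nil => simp at hrd; omega
      | cons r R' => exact ⟨r, R', rfl⟩
    have hrx : r < x := by
      rw [hRr] at hrd
      simpa using hrd
    -- left: w2 empty, w1 = L; last of L (if any) is > x
    have hLlast : ∀ M u, L = M ++ [u] → x < u := by
      intro M u hMu
      have hlenL : L.length = M.length + 1 := by rw [hMu]; simp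
      have h2 := wordext_split n M (u :: x :: R) l (by rw [hsplit, hMu]; simp) 0
      simp only [Nat.add_zero, List.cons_append, List.getD_cons_zero] at h2
      rw [hlenL, h2] at hld
      exact hld
    have hw2 : L.reverse.takeWhile (fun y => decide (y < x)) = [] := by
      rcases List.eq_nil_or_concat L with hL0 | ⟨M, u, hMu⟩
      · rw [hL0]; rfl
      · rw [List.concat_eq_append] at hMu
        have hu := hLlast M u hMu
        rw [hMu, List.reverse_append, List.reverse_singleton, List.singleton_append,
          List.takeWhile_cons, if_neg (by simp only [decide_eq_true_eq]; omega)]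
    have hw1 : (L.reverse.dropWhile (fun y => decide (y < x))).reverse = L := by
      have h0 := List.takeWhile_append_dropWhile (p := fun y => decide (y < x)) (l := L.reverse)
      rw [hw2, List.nil_append] at h0
      rw [h0, List.reverse_reverse]
    -- right decomposition
    set w4 := R.takeWhile (fun y => decide (y < x)) with hw4d
    set w5 := R.dropWhile (fun y => decide (y < x)) with hw5d
    clear_value w4 w5
    have hR45 : R = w4 ++ w5 := by
      rw [hw4d, hw5d]; exact List.takeWhile_append_dropWhile.symm
    have hw4c : w4 = r :: R'.takeWhile (fun y => decide (y < x)) := by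
      rw [hw4d, hRr, List.takeWhile_cons, if_pos (by simpa using hrx)]
    have hall4 : ∀ y ∈ w4, y < x := by
      intro y hy
      have := List.mem_takeWhile_imp (hw4d ▸ hy)
      simpa using this
    obtain ⟨N, v, hNv⟩ : ∃ N v, w4 = N ++ [v] := by
      rcases List.eq_nil_or_concat w4 with h0 | ⟨N, v, hNv⟩
      · rw [h0] at hw4c; simp at hw4c
      · exact ⟨N, v, by rw [hNv, List.concat_eq_append]⟩
    have hvx : v < x := hall4 v (by rw [hNv]; simp)
    -- w5 head > x (or w5 empty)
    have hw5big : ∀ s w5', w5 = s :: w5' → x < s := by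
      intro s w5' hs
      have hps : (fun y => decide (y < x)) s = false :=
        dropWhile_head_false (hs ▸ hw5d.symm)
      have hsx : ¬ s < x := by simpa using hps
      have hsR : s ∈ R := (List.dropWhile_sublist _).mem
        (by rw [← hw5d, hs]; exact List.mem_cons_self)
      have hxR : x ∉ R := by
        have hnd2 : (x :: R).Nodup := by
          rw [hsplit] at hnd
          exact hnd.of_append_right
        exact (List.nodup_cons.mp hnd2).1
      have : s ≠ x := fun he => hxR (he ▸ hsR)
      omega
    -- junction values
    have j1 : jnc [x] (w4 ++ w5) = 1 := by
      rw [hw4c]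
      simp [jnc, hrx]
    have j2 : jnc w4 (x :: w5) = 0 := by
      rw [hNv]
      simp only [jnc, List.getLastD_concat, List.headD_cons]
      rw [if_neg (by omega)]
    have j3 : jnc [x] w5 = 0 := by
      cases hw5e : w5 with
      | nil => simp [jnc]
      | cons s w5' =>
        have := hw5big s w5' hw5e
        simp only [jnc, List.headD_cons, getLastD_single]
        exact if_neg (by omega)
    have j4 : jnc w4 w5 = 0 := by
      cases hw5e : w5 with
      | nil => rw [hNv]; simp [jnc, List.getLastD_concat]
      | cons s w5' =>
        have := hw5big s w5' hw5e
        rw [hNv]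
        simp only [jnc, List.getLastD_concat, List.headD_cons]
        rw [if_neg (by omega)]
    have j5 : jnc L (w4 ++ (x :: w5)) = jnc L (x :: (w4 ++ w5)) := by
      rcases List.eq_nil_or_concat L with hL0 | ⟨M, u, hMu⟩
      · rw [hL0]; simp [jnc_nil_left]
      · rw [List.concat_eq_append] at hMu
        have hu := hLlast M u hMu
        rw [hMu, hw4c]
        simp only [jnc, List.getLastD_concat, List.headD_cons, List.cons_append]
        rw [if_pos (by omega), if_pos (by omega)]
    have hl2 : l = L ++ (x :: (w4 ++ w5)) := by rw [hsplit, hR45]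
    have hgoal : (L.reverse.dropWhile (fun y => decide (y < x))).reverse
        ++ w4
        ++ x :: ((L.reverse.takeWhile (fun y => decide (y < x))).reverse
          ++ w5)
        = L ++ (w4 ++ (x :: w5)) := by
      rw [hw1, hw2]
      simp [List.append_assoc]
    rw [hgoal]
    have e1 := desL_append L (w4 ++ (x :: w5))
    have e2 := desL_append w4 (x :: w5)
    have e3 := desL_cons x w5
    have f1 : desL l = desL L + desL (x :: (w4 ++ w5)) + jnc L (x :: (w4 ++ w5)) := by
      rw [hl2]; exact desL_append _ _
    have f2 := desL_cons x (w4 ++ w5)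
    have f3 := desL_append w4 w5
    omega


end FS
end
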